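/- Let H be a symmetric positive definite d×d real matrix with eigenvalues σ_1, …, σ_d, let w* ∈ ℝ^d, and let λ > 0, μ ∈ [0,1), S > 0, L* > 0, α ≥ 0 be real numbers with c := λ/(1+μ) satisfying 2 − c(σ_i + α) > 0 for every i. Define Σ := (2λL*/(S(1−μ))) · H (H + αI_d)^{−1} (2I_d − c(H + αI_d))^{−1}, the Gaussian density p(w) := (2π)^{−d/2} (det Σ)^{−1/2} exp( −½ (w − w*)ᵀ Σ^{−1} (w − w*) ), the quadratic loss L(w) := L* + ½ (w − w*)ᵀ H (w − w*), and the gradient g(w) := H(w − w*). Then for every w ∈ ℝ^d: ln p(w) = −(d/2)ln(2π) − (d/2)ln( 2λ/(S(1−μ)) ) − (d/2)·ln L* + ½ Σ_{i=1}^d ln( (2 − c(σ_i + α))(σ_i + α) / σ_i ) − (S(1−μ)/(2λ))·(1 − cα)·‖w − w*‖²/L* − (S(1−μ)α/(4λ))·(2 − cα)·( g(w)ᵀ H^{−3} g(w) )/L* + (S(1−μ)/(2(1+μ)))·( L(w) − L* )/L*. -/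

import Mathlib

open Matrix

private lemma quad_conj {d : ℕ} (H X : Matrix (Fin d) (Fin d) ℝ) (v : Fin d → ℝ) :
    (H *ᵥ v) ⬝ᵥ (X *ᵥ (H *ᵥ v)) = v ⬝ᵥ ((Hᵀ * X * H) *ᵥ v) := by
  calc (H *ᵥ v) ⬝ᵥ (X *ᵥ (H *ᵥ v)) = (v ᵥ* Hᵀ) ⬝ᵥ ((X * H) *ᵥ v) := by
        rw [mulVec_mulVec, vecMul_transpose]
    _ = v ⬝ᵥ (Hᵀ *ᵥ ((X * H) *ᵥ v)) := (dotProduct_mulVec _ _ _).symm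
    _ = v ⬝ᵥ ((Hᵀ * X * H) *ᵥ v) := by rw [mulVec_mulVec, mul_assoc]

set_option maxHeartbeats 1600000 in
/-- Exact form of the log-posterior of model parameters trained with SGD
(learning rate λ, momentum μ, batch size S, ℓ2-regularization α) converging to
a local minimum w* with Hessian H and loss value L*: under the Laplace
approximation the posterior is the Gaussian N(w*, Σ) with Σ the stationary SGD
fluctuation covariance. -/
theorem stmt_6 {d : ℕ} (H : Matrix (Fin d) (Fin d) ℝ)
    (hH : H.IsHermitian) (hPD : H.PosDef)
    (wstar : Fin d → ℝ)
    (lam μ S Lstar α : ℝ) (hlam : 0 < lam) (hμ0 : 0 ≤ μ) (hμ1 : μ < 1)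
    (hS : 0 < S) (hLstar : 0 < Lstar) (hα : 0 ≤ α)
    (c : ℝ) (hc : c = lam / (1 + μ))
    (hgap : ∀ i : Fin d, 0 < 2 - c * (hH.eigenvalues i + α))
    (Sgm : Matrix (Fin d) (Fin d) ℝ)
    (hSgm : Sgm = (2 * lam * Lstar / (S * (1 - μ))) •
      (H * (H + α • (1 : Matrix (Fin d) (Fin d) ℝ))⁻¹ *
        ((2 : ℝ) • (1 : Matrix (Fin d) (Fin d) ℝ) -
          c • (H + α • (1 : Matrix (Fin d) (Fin d) ℝ)))⁻¹))
    (p : (Fin d → ℝ) → ℝ)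
    (hp : ∀ w, p w = (2 * Real.pi) ^ (-(d : ℝ) / 2) * Sgm.det ^ (-(1 : ℝ) / 2) *
      Real.exp (-(1 / 2) * ((w - wstar) ⬝ᵥ Sgm⁻¹ *ᵥ (w - wstar))))
    (Lfun : (Fin d → ℝ) → ℝ)
    (hLfun : ∀ w, Lfun w = Lstar + (1 / 2) * ((w - wstar) ⬝ᵥ H *ᵥ (w - wstar)))
    (g : (Fin d → ℝ) → (Fin d → ℝ))
    (hg : ∀ w, g w = H *ᵥ (w - wstar)) :
    ∀ w : Fin d → ℝ,
      Real.log (p w) =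
        -((d : ℝ) / 2) * Real.log (2 * Real.pi)
        - ((d : ℝ) / 2) * Real.log (2 * lam / (S * (1 - μ)))
        - ((d : ℝ) / 2) * Real.log Lstar
        + (1 / 2) * ∑ i : Fin d, Real.log
            ((2 - c * (hH.eigenvalues i + α)) * (hH.eigenvalues i + α) / hH.eigenvalues i)
        - (S * (1 - μ) / (2 * lam)) * (1 - c * α) *
            ((w - wstar) ⬝ᵥ (w - wstar)) / Lstar
        - (S * (1 - μ) * α / (4 * lam)) * (2 - c * α) *
            ((g w) ⬝ᵥ (H⁻¹ ^ 3) *ᵥ (g w)) / Lstar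
        + (S * (1 - μ) / (2 * (1 + μ))) * ((Lfun w - Lstar) / Lstar) := by
  intro w
  set σ : Fin d → ℝ := hH.eigenvalues with hσ
  have hσpos : ∀ i, 0 < σ i := fun i => hPD.eigenvalues_pos i
  have hμ1' : (0:ℝ) < 1 - μ := by linarith
  have hμ1'' : (0:ℝ) < 1 + μ := by linarith
  set k : ℝ := 2 * lam * Lstar / (S * (1 - μ)) with hk
  have hkpos : 0 < k := by positivity
  set A : Matrix (Fin d) (Fin d) ℝ := H + α • (1 : Matrix (Fin d) (Fin d) ℝ) with hAdef
  set B : Matrix (Fin d) (Fin d) ℝ :=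
    (2 : ℝ) • (1 : Matrix (Fin d) (Fin d) ℝ) - c • A with hBdef
  set U : Matrix (Fin d) (Fin d) ℝ := (hH.eigenvectorUnitary : Matrix (Fin d) (Fin d) ℝ)
    with hU
  have hU1 : U * star U = 1 := (Matrix.mem_unitaryGroup_iff).mp (hH.eigenvectorUnitary).2
  have hU2 : star U * U = 1 := (Matrix.mem_unitaryGroup_iff').mp (hH.eigenvectorUnitary).2
  have hspec : H = U * Matrix.diagonal σ * star U := by
    have := hH.spectral_theorem
    rwa [RCLike.ofReal_real_eq_id, Function.id_comp] at this
  -- conjugation facts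
  have hdetU : Matrix.det U * Matrix.det (star U) = 1 := by
    rw [← Matrix.det_mul, hU1, Matrix.det_one]
  have detConj : ∀ X : Matrix (Fin d) (Fin d) ℝ,
      Matrix.det (U * X * star U) = Matrix.det X := by
    intro X
    rw [Matrix.det_mul, Matrix.det_mul]
    calc Matrix.det U * Matrix.det X * Matrix.det (star U)
        = Matrix.det U * Matrix.det (star U) * Matrix.det X := by ring
      _ = Matrix.det X := by rw [hdetU, one_mul]
  have hAconj : A = U * Matrix.diagonal (fun i => σ i + α) * star U := by
    have : Matrix.diagonal (fun i => σ i + α)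
        = Matrix.diagonal σ + α • (1 : Matrix (Fin d) (Fin d) ℝ) := by
      rw [Matrix.smul_one_eq_diagonal, ← Matrix.diagonal_add]
    rw [hAdef, this, Matrix.mul_add, Matrix.add_mul, ← hspec, Matrix.mul_smul,
      Matrix.smul_mul, mul_one, hU1]
  have hBconj : B = U * Matrix.diagonal (fun i => 2 - c * (σ i + α)) * star U := by
    have : Matrix.diagonal (fun i => 2 - c * (σ i + α))
        = (2:ℝ) • (1 : Matrix (Fin d) (Fin d) ℝ)
          - c • Matrix.diagonal (fun i => σ i + α) := by
      rw [Matrix.smul_one_eq_diagonal, ← Matrix.diagonal_smul, ← Matrix.diagonal_sub]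
      rfl
    rw [hBdef, this, Matrix.mul_sub, Matrix.sub_mul, hAconj, Matrix.mul_smul,
      Matrix.smul_mul, Matrix.mul_smul, Matrix.smul_mul, mul_one, hU1]
  -- determinants
  have detH : Matrix.det H = ∏ i, σ i := by
    rw [hspec, detConj, Matrix.det_diagonal]
  have detA : Matrix.det A = ∏ i, (σ i + α) := by
    rw [hAconj, detConj, Matrix.det_diagonal]
  have detB : Matrix.det B = ∏ i, (2 - c * (σ i + α)) := by
    rw [hBconj, detConj, Matrix.det_diagonal]
  have detHpos : 0 < Matrix.det H := hPD.det_pos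
  have detApos : 0 < Matrix.det A := by
    rw [detA]; exact Finset.prod_pos (fun i _ => by have := hσpos i; linarith)
  have detBpos : 0 < Matrix.det B := by
    rw [detB]; exact Finset.prod_pos (fun i _ => hgap i)
  have hHu : IsUnit (Matrix.det H) := (detHpos.ne').isUnit
  have hAu : IsUnit (Matrix.det A) := (detApos.ne').isUnit
  have hBu : IsUnit (Matrix.det B) := (detBpos.ne').isUnit
  have hHinv : H * H⁻¹ = 1 := Matrix.mul_nonsing_inv H hHu
  have hHinv' : H⁻¹ * H = 1 := Matrix.nonsing_inv_mul H hHu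
  -- Σ⁻¹
  have hM : Sgm = k • (H * A⁻¹ * B⁻¹) := by rw [hSgm]
  have hMdet : Matrix.det (H * A⁻¹ * B⁻¹)
      = Matrix.det H * (Matrix.det A)⁻¹ * (Matrix.det B)⁻¹ := by
    rw [Matrix.det_mul, Matrix.det_mul, Matrix.det_nonsing_inv, Matrix.det_nonsing_inv,
      Ring.inverse_eq_inv, Ring.inverse_eq_inv]
  have hMdetpos : 0 < Matrix.det (H * A⁻¹ * B⁻¹) := by
    rw [hMdet]; positivity
  have detSgm : Matrix.det Sgm
      = k ^ d * (Matrix.det H * (Matrix.det A)⁻¹ * (Matrix.det B)⁻¹) := by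
    rw [hM, Matrix.det_smul, hMdet, Fintype.card_fin]
  have detSgmPos : 0 < Matrix.det Sgm := by
    rw [detSgm, ← hMdet]; positivity
  -- inverse of Σ
  have hMinv : (H * A⁻¹ * B⁻¹)⁻¹ = B * A * H⁻¹ := by
    rw [Matrix.mul_inv_rev, Matrix.mul_inv_rev, Matrix.nonsing_inv_nonsing_inv _ hBu,
      Matrix.nonsing_inv_nonsing_inv _ hAu, mul_assoc]
  have hSgmInv : Sgm⁻¹ = k⁻¹ • (B * A * H⁻¹) := by
    rw [hM]
    have hkinv : Invertible k := invertibleOfNonzero hkpos.ne'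
    have hdetM : IsUnit (Matrix.det (H * A⁻¹ * B⁻¹)) := hMdetpos.ne'.isUnit
    rw [Matrix.inv_smul (H * A⁻¹ * B⁻¹) k hdetM, hMinv, invOf_eq_inv k]
  -- key matrix identity
  have hKey : B * A * H⁻¹
      = (2 - 2*c*α) • (1 : Matrix (Fin d) (Fin d) ℝ)
        + (2*α - c*α^2) • H⁻¹ - c • H := by
    have hBA : B * A = (2:ℝ) • A - c • (A * A) := by
      rw [hBdef, Matrix.sub_mul, Matrix.smul_mul, Matrix.smul_mul, one_mul]
    have hAA : A * A = H * H + (2*α) • H + (α^2) • (1 : Matrix (Fin d) (Fin d) ℝ) := by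
      rw [hAdef]
      simp only [Matrix.add_mul, Matrix.mul_add, Matrix.smul_mul, Matrix.mul_smul,
        one_mul, mul_one, smul_smul]
      module
    have hHHinv : H * H * H⁻¹ = H := by rw [mul_assoc, hHinv, mul_one]
    have hAHinv : A * H⁻¹ = 1 + α • H⁻¹ := by
      rw [hAdef, Matrix.add_mul, Matrix.smul_mul, one_mul, hHinv]
    have hAAHinv : A * A * H⁻¹ = H + (2*α) • (1 : Matrix (Fin d) (Fin d) ℝ)
        + (α^2) • H⁻¹ := by
      rw [hAA, Matrix.add_mul, Matrix.add_mul, Matrix.smul_mul, Matrix.smul_mul,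
        hHHinv, hHinv, one_mul]
    rw [hBA, Matrix.sub_mul, Matrix.smul_mul, Matrix.smul_mul, hAHinv, hAAHinv]
    module
  set v : Fin d → ℝ := w - wstar with hv
  -- quadratic form
  have hQuad : v ⬝ᵥ Sgm⁻¹ *ᵥ v
      = k⁻¹ * ((2 - 2*c*α) * (v ⬝ᵥ v) + (2*α - c*α^2) * (v ⬝ᵥ H⁻¹ *ᵥ v)
          - c * (v ⬝ᵥ H *ᵥ v)) := by
    rw [hSgmInv, hKey]
    rw [Matrix.smul_mulVec, dotProduct_smul, smul_eq_mul]
    congr 1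
    rw [Matrix.sub_mulVec, Matrix.add_mulVec, Matrix.smul_mulVec,
      Matrix.smul_mulVec, Matrix.smul_mulVec, Matrix.one_mulVec,
      dotProduct_sub, dotProduct_add, dotProduct_smul, dotProduct_smul, dotProduct_smul,
      smul_eq_mul, smul_eq_mul, smul_eq_mul]
  -- the g-term
  have hGterm : (g w) ⬝ᵥ (H⁻¹ ^ 3) *ᵥ (g w) = v ⬝ᵥ H⁻¹ *ᵥ v := by
    rw [hg, ← hv, quad_conj]
    have hHt : Hᵀ = H := by
      have := hH.eq
      rwa [Matrix.conjTranspose_eq_transpose_of_trivial] at this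
    have : Hᵀ * H⁻¹ ^ 3 * H = H⁻¹ := by
      rw [hHt, pow_succ, pow_two]
      calc H * (H⁻¹ * H⁻¹ * H⁻¹) * H = H * H⁻¹ * H⁻¹ * (H⁻¹ * H) := by
            noncomm_ring
        _ = H⁻¹ := by rw [hHinv, hHinv', one_mul, mul_one]
    rw [this]
  -- the L-term
  have hLterm : Lfun w - Lstar = (1/2) * (v ⬝ᵥ H *ᵥ v) := by
    rw [hLfun, ← hv]; ring
  -- log of determinant
  have hlogdet : Real.log (Matrix.det Sgm)
      = d * Real.log (2 * lam / (S * (1 - μ))) + d * Real.log Lstar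
        - ∑ i, Real.log ((2 - c * (σ i + α)) * (σ i + α) / σ i) := by
    have hkk : k = (2 * lam / (S * (1 - μ))) * Lstar := by rw [hk]; ring
    have h1 : Real.log (k ^ d) = d * Real.log (2 * lam / (S * (1 - μ))) + d * Real.log Lstar := by
      rw [Real.log_pow, hkk, Real.log_mul (by positivity) hLstar.ne']
      ring
    have h2 : Real.log (Matrix.det H * (Matrix.det A)⁻¹ * (Matrix.det B)⁻¹)
        = - ∑ i, Real.log ((2 - c * (σ i + α)) * (σ i + α) / σ i) := by
      rw [Real.log_mul (by positivity) (by positivity),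
        Real.log_mul (by positivity) (by positivity),
        Real.log_inv, Real.log_inv, detH, detA, detB,
        Real.log_prod (fun i _ => (hσpos i).ne'),
        Real.log_prod (fun i _ => (by have := hσpos i; positivity : (0:ℝ) < σ i + α).ne'),
        Real.log_prod (fun i _ => (hgap i).ne')]
      have hratio : ∀ i ∈ Finset.univ, Real.log ((2 - c * (σ i + α)) * (σ i + α) / σ i)
          = Real.log (2 - c * (σ i + α)) + Real.log (σ i + α) - Real.log (σ i) := by
        intro i _
        have h1 : (0:ℝ) < σ i := hσpos i
        have h2 : (0:ℝ) < σ i + α := by linarith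
        have h3 : (0:ℝ) < 2 - c * (σ i + α) := hgap i
        rw [Real.log_div (by positivity) h1.ne', Real.log_mul h3.ne' h2.ne']
      rw [Finset.sum_congr rfl hratio, Finset.sum_sub_distrib, Finset.sum_add_distrib]
      ring
    rw [detSgm, Real.log_mul (by positivity) (by rw [← hMdet]; exact hMdetpos.ne'), h1, h2]
    ring
  -- log p
  have hppos1 : (0:ℝ) < (2 * Real.pi) ^ (-(d : ℝ) / 2) :=
    Real.rpow_pos_of_pos (by positivity) _
  have hppos2 : (0:ℝ) < Matrix.det Sgm ^ (-(1:ℝ) / 2) := Real.rpow_pos_of_pos detSgmPos _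
  have hlogp : Real.log (p w)
      = (-(d : ℝ) / 2) * Real.log (2 * Real.pi)
        + (-(1:ℝ)/2) * Real.log (Matrix.det Sgm)
        + (-(1 / 2) * (v ⬝ᵥ Sgm⁻¹ *ᵥ v)) := by
    rw [hp, ← hv, Real.log_mul (by positivity) (Real.exp_pos _).ne',
      Real.log_mul hppos1.ne' hppos2.ne', Real.log_exp,
      Real.log_rpow (by positivity), Real.log_rpow detSgmPos]
  rw [hlogp, hlogdet, hQuad, hGterm, hLterm]
  have hkinveq : k⁻¹ = S * (1 - μ) / (2 * lam * Lstar) := by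
    rw [hk]; field_simp
  rw [hkinveq, hc]
  have hne1 : (1:ℝ) + μ ≠ 0 := hμ1''.ne'
  have hne2 : (1:ℝ) - μ ≠ 0 := hμ1'.ne'
  field_simp
  ring
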